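/- In the double D~ of the Jordan plane, for all n ≥ 1: u y^n = y^n u + n y^{n−1} − ∑_{k=0}^{n−1} binom(n,k+1) ((k+1)!/2^k) y^{n−1−k} x^k g, and u^n y = y u^n + n(1 − g) u^{n−1}. -/
import Mathlib

section Aux
variable {K A : Type*} [Field K] [Ring A] [Algebra K A] (g x y : A)

private lemma aux_xy (hyx : y * x = x * y - (1/2 : K) • x ^ 2) :
    x * y = y * x + (1/2 : K) • x ^ 2 := by
  rw [hyx, sub_add_cancel]

private lemma aux_xky (h2 : (2 : K) ≠ 0)
    (hyx : y * x = x * y - (1/2 : K) • x ^ 2) :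
    ∀ k : ℕ, x ^ k * y = y * x ^ k + ((k : K)/2) • x ^ (k+1) := by
  intro k
  induction k with
  | zero => simp
  | succ k ih =>
    have h1 : x ^ (k+1) * y = x * (x ^ k * y) := by rw [← mul_assoc, ← pow_succ']
    rw [h1, ih, mul_add, ← mul_assoc, aux_xy x y hyx, mul_smul_comm, ← pow_succ']
    rw [add_mul, smul_mul_assoc, mul_assoc, ← pow_add]
    have h3 : 2 + k = k + 1 + 1 := by omega
    rw [h3, ← pow_succ']
    push_cast
    match_scalars <;> (field_simp; try ring)

private lemma aux_C (h2 : (2 : K) ≠ 0) (hgy : g * y = y * g + x * g)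
    (hyx : y * x = x * y - (1/2 : K) • x ^ 2) :
    ∀ m k : ℕ, (y ^ m * x ^ k * g) * y
      = y ^ (m+1) * x ^ k * g + (((k : K)+2)/2) • (y ^ m * x ^ (k+1) * g) := by
  intro m k
  calc (y ^ m * x ^ k * g) * y = y ^ m * (x ^ k * (g * y)) := by
        simp only [mul_assoc]
  _ = y ^ m * (x ^ k * y * g) + y ^ m * (x ^ (k+1) * g) := by
        rw [hgy, mul_add, ← mul_assoc (x ^ k), ← mul_assoc (x ^ k) x g, ← pow_succ, mul_add]
  _ = y ^ (m+1) * x ^ k * g + (((k : K)+2)/2) • (y ^ m * x ^ (k+1) * g) := by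
        rw [aux_xky x y h2 hyx k, add_mul, smul_mul_assoc, mul_add, mul_smul_comm]
        simp only [← mul_assoc, ← pow_succ]
        match_scalars <;> (field_simp; try ring)

end Aux

/-- In the double `D~` of the Jordan plane (char `≠ 2`), for all `n ≥ 1`:
`u y^n = y^n u + n y^{n-1} - ∑_{k=0}^{n-1} C(n,k+1)((k+1)!/2^k) y^{n-1-k} x^k g`
and `u^n y = y u^n + n(1 - g) u^{n-1}`. -/
theorem stmt12 (K : Type*) [Field K] (h2 : (2 : K) ≠ 0)
    (A : Type*) [Ring A] [Algebra K A] (u v z g g' x y : A)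
    (hgx : g * x = x * g) (hgy : g * y = y * g + x * g)
    (hyx : y * x = x * y - (1/2 : K) • x ^ 2)
    (hgg' : g * g' = 1) (hg'g : g' * g = 1)
    (hvz : v * z = z * v + v) (huz : u * z = z * u + u)
    (hvu : v * u = u * v - (1/2 : K) • u ^ 2)
    (hzy : z * y = y * z + y) (hzx : z * x = x * z + x)
    (hvg : v * g = g * v + g * u) (hug : u * g = g * u)
    (hvx : v * x = x * v + (1 - g) + x * u) (hux : u * x = x * u)
    (huy : u * y = y * u + (1 - g)) (hvy : v * y = y * v - g * z + y * u)
    (hzg : z * g = g * z)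
    (n : ℕ) (hn : 1 ≤ n) :
    u * y ^ n = y ^ n * u + (n : K) • y ^ (n - 1)
      - ∑ k ∈ Finset.range n,
          ((n.choose (k + 1) : K) * (Nat.factorial (k + 1) : K) / 2 ^ k) •
            (y ^ (n - 1 - k) * x ^ k * g) ∧
    u ^ n * y = y * u ^ n + (n : K) • ((1 - g) * u ^ (n - 1)) := by
  -- coefficient notation
  set c : ℕ → ℕ → K := fun n k =>
    (n.choose (k + 1) : K) * (Nat.factorial (k + 1) : K) / 2 ^ k with hc
  have hc0 : ∀ m : ℕ, c m 0 = (m : K) := by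
    intro m; simp [hc, Nat.choose_one_right, Nat.factorial_one]
  have hcn : ∀ m : ℕ, c m m = 0 := by
    intro m; simp [hc, Nat.choose_succ_self]
  have hcrec : ∀ m k : ℕ,
      c (m+1) (k+1) = c m (k+1) + c m k * (((k : K)+2)/2) := by
    intro m k
    have hp : (m+1).choose (k+2) = m.choose (k+1) + m.choose (k+2) :=
      Nat.choose_succ_succ' ..
    simp only [hc]
    rw [show k+1+1 = k+2 from rfl, hp, Nat.factorial_succ (k+1)]
    push_cast
    field_simp
    ring
  constructor
  · -- first identity, by induction on n
    induction n, hn using Nat.le_induction with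
    | base =>
      simp only [pow_one, Nat.cast_one, one_smul, Finset.sum_range_one]
      simp [huy, hc0]
      abel
    | succ n hn ih =>
      -- sum identity
      have hsum : ∑ k ∈ Finset.range (n+1), c (n+1) k • (y ^ (n - k) * x ^ k * g)
          = y ^ n * g
            + ∑ k ∈ Finset.range n, c n k • (y ^ (n - k) * x ^ k * g)
            + ∑ k ∈ Finset.range n,
                (c n k * (((k : K)+2)/2)) • (y ^ (n - 1 - k) * x ^ (k+1) * g) := by
        obtain ⟨m, rfl⟩ : ∃ m, n = m + 1 := ⟨n - 1, by omega⟩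
        simp only [Nat.add_sub_cancel]
        rw [Finset.sum_range_succ'
          (fun k => c (m+1+1) k • (y ^ (m+1 - k) * x ^ k * g)) (m+1)]
        rw [Finset.sum_range_succ'
          (fun k => c (m+1) k • (y ^ (m+1 - k) * x ^ k * g)) m]
        have e1 : ∀ k : ℕ, m + 1 - (k + 1) = m - k := fun k => by omega
        simp only [e1, Nat.sub_zero, pow_zero, mul_one, hc0]
        rw [Finset.sum_range_succ
          (fun k => c (m+1+1) (k+1) • (y ^ (m - k) * x ^ (k+1) * g)) m]
        rw [Finset.sum_range_succ
          (fun k => (c (m+1) k * (((k : K)+2)/2)) • (y ^ (m - k) * x ^ (k+1) * g)) m]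
        have hterm : ∀ k : ℕ, c (m+1+1) (k+1) • (y ^ (m - k) * x ^ (k+1) * g)
            = c (m+1) (k+1) • (y ^ (m - k) * x ^ (k+1) * g)
              + (c (m+1) k * (((k : K)+2)/2)) • (y ^ (m - k) * x ^ (k+1) * g) := by
          intro k; rw [hcrec, add_smul]
        rw [Finset.sum_congr rfl (fun k _ => hterm k), Finset.sum_add_distrib,
            hterm m, hcn (m+1), zero_smul, zero_add]
        push_cast
        module
      have hy1 : y ^ (n - 1) * y = y ^ n := by
        rw [← pow_succ, Nat.sub_add_cancel hn]
      have hSy : (∑ k ∈ Finset.range n, c n k • (y ^ (n - 1 - k) * x ^ k * g)) * y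
          = ∑ k ∈ Finset.range n, c n k • (y ^ (n - k) * x ^ k * g)
            + ∑ k ∈ Finset.range n,
                (c n k * (((k : K)+2)/2)) • (y ^ (n - 1 - k) * x ^ (k+1) * g) := by
        rw [Finset.sum_mul, ← Finset.sum_add_distrib]
        refine Finset.sum_congr rfl (fun k hk => ?_)
        have hk' : k < n := Finset.mem_range.mp hk
        rw [smul_mul_assoc, aux_C g x y h2 hgy hyx (n-1-k) k,
            show n - 1 - k + 1 = n - k from by omega, smul_add, smul_smul]
      calc u * y ^ (n+1) = (u * y ^ n) * y := by rw [pow_succ, mul_assoc]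
      _ = (y ^ n * u + (n : K) • y ^ (n-1)
            - ∑ k ∈ Finset.range n, c n k • (y ^ (n - 1 - k) * x ^ k * g)) * y := by
          rw [ih]
      _ = y ^ n * (u * y) + (n : K) • y ^ n
            - (∑ k ∈ Finset.range n, c n k • (y ^ (n - 1 - k) * x ^ k * g)) * y := by
          rw [sub_mul, add_mul, smul_mul_assoc, hy1, mul_assoc]
      _ = y ^ (n+1) * u + ((n : K)+1) • y ^ n
            - ∑ k ∈ Finset.range (n+1), c (n+1) k • (y ^ (n - k) * x ^ k * g) := by
          rw [huy, hSy, hsum, mul_add, ← mul_assoc, ← pow_succ]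
          simp only [add_smul, one_smul, mul_sub, mul_one]
          abel
      _ = y ^ (n+1) * u + ((n+1 : ℕ) : K) • y ^ (n+1-1)
            - ∑ k ∈ Finset.range (n+1), c (n+1) k • (y ^ (n+1-1 - k) * x ^ k * g) := by
          push_cast
          simp only [Nat.add_sub_cancel]
  · -- second identity, by induction on n
    have hu1g : u * (1 - g) = (1 - g) * u := by
      rw [mul_sub, sub_mul, mul_one, one_mul, hug]
    induction n, hn using Nat.le_induction with
    | base => simpa using huy
    | succ m hm ih =>
      have hum : u * u ^ (m-1) = u ^ m := by
        rw [← pow_succ', Nat.sub_add_cancel hm]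
      calc u ^ (m+1) * y = u * (u ^ m * y) := by rw [pow_succ', mul_assoc]
      _ = u * (y * u ^ m) + (m : K) • (u * ((1 - g) * u ^ (m-1))) := by
          rw [ih, mul_add, mul_smul_comm]
      _ = (u * y) * u ^ m + (m : K) • ((1 - g) * u ^ m) := by
          rw [← mul_assoc u y, ← mul_assoc u (1-g), hu1g, mul_assoc (1-g) u, hum]
      _ = y * u ^ (m+1) + ((m : K)+1) • ((1 - g) * u ^ m) := by
          rw [huy, add_mul, mul_assoc, ← pow_succ', add_smul, one_smul]
          abel
      _ = y * u ^ (m+1) + ((m+1 : ℕ) : K) • ((1 - g) * u ^ (m+1-1)) := by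
          push_cast
          simp only [Nat.add_sub_cancel]
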